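/- Under the setup, suppose D₁ ≥ D₀ almost surely, for all d, z ∈ {0,1} the pair (Z, W) is conditionally independent of Y_{d,z} given (D₁, D₀), Z is conditionally independent of (D₁, D₀) given W, P(Z = z, W = 1) > 0 for z ∈ {0,1}, P(AT) > 0, P(CP) > 0, P(CP | W = 1) > 0, and E[Y_{1,1} − Y_{1,0} | AT] = ρ₁. Then E[Y_{1,1} | CP] = (r₁(1) − ρ₁·P(AT | W = 1)) / P(CP | W = 1), where r₁(1) = E[Y·D | Z = 1, W = 1] − E[Y·D | Z = 0, W = 1]. -/

import Mathlib

open MeasureTheory ProbabilityTheory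

/-- `pr μ A` is the probability of the event `A`, as a real number. -/
noncomputable def pr {Ω : Type*} [MeasurableSpace Ω] (μ : Measure Ω) (A : Set Ω) : ℝ :=
  (μ A).toReal

/-- `prCond μ A B` is the conditional probability `P(A | B) = P(A ∩ B) / P(B)`. -/
noncomputable def prCond {Ω : Type*} [MeasurableSpace Ω] (μ : Measure Ω) (A B : Set Ω) : ℝ :=
  pr μ (A ∩ B) / pr μ B

/-- `cexp μ A f` is the conditional expectation `E[f | A]` of `f` given the event `A`. -/
noncomputable def cexp {Ω : Type*} [MeasurableSpace Ω] (μ : Measure Ω) (A : Set Ω)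
    (f : Ω → ℝ) : ℝ :=
  ∫ ω, f ω ∂(μ[|A])

/-- The event `{ω | f ω = c}`. -/
def evEq {Ω : Type*} (f : Ω → ℝ) (c : ℝ) : Set Ω := {ω | f ω = c}

/-- Always takers: `D₁ = D₀ = 1`. -/
def ATset {Ω : Type*} (D1 D0 : Ω → ℝ) : Set Ω := {ω | D1 ω = 1 ∧ D0 ω = 1}

/-- Never takers: `D₁ = D₀ = 0`. -/
def NTset {Ω : Type*} (D1 D0 : Ω → ℝ) : Set Ω := {ω | D1 ω = 0 ∧ D0 ω = 0}

/-- Compliers: `D₁ = 1`, `D₀ = 0`. -/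
def CPset {Ω : Type*} (D1 D0 : Ω → ℝ) : Set Ω := {ω | D1 ω = 1 ∧ D0 ω = 0}


section AuxLemmas
variable {Ω : Type*} [MeasurableSpace Ω] {μ : Measure Ω} [IsProbabilityMeasure μ]

omit [IsProbabilityMeasure μ] in
lemma my_cexp_eq_setIntegral (A : Set Ω) (f : Ω → ℝ) :
    cexp μ A f = (pr μ A)⁻¹ * ∫ ω in A, f ω ∂μ := by
  simp [cexp, pr, ProbabilityTheory.cond, integral_smul_measure, ENNReal.toReal_inv,
    smul_eq_mul]

omit [IsProbabilityMeasure μ] in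
lemma my_integrable_cond {A : Set Ω} (hA : μ A ≠ 0) {f : Ω → ℝ} (hf : Integrable f μ) :
    Integrable f (μ[|A]) := by
  rw [ProbabilityTheory.cond]
  exact (hf.restrict).smul_measure (by simp [hA])

lemma my_key_lemma {G S : Set Ω} (hG : MeasurableSet G) (hS : MeasurableSet S)
    (hG0 : μ G ≠ 0) {f : Ω → ℝ} (hfi : Integrable f μ)
    (hindep : IndepFun (S.indicator (fun _ => (1:ℝ))) f (μ[|G])) :
    ∫ ω in S ∩ G, f ω ∂μ = cexp μ G f * pr μ (S ∩ G) := by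
  have hpG : IsProbabilityMeasure (μ[|G]) := cond_isProbabilityMeasure hG0
  have h1 : ∫ ω in S ∩ G, f ω ∂μ = ∫ ω in G, S.indicator f ω ∂μ := by
    rw [setIntegral_indicator hS, Set.inter_comm]
  have hGt : (pr μ G) ≠ 0 := by
    simp only [pr, ne_eq, ENNReal.toReal_eq_zero_iff]
    push_neg
    exact ⟨hG0, measure_ne_top μ G⟩
  have h2 : ∫ ω in G, S.indicator f ω ∂μ = pr μ G * ∫ ω, S.indicator f ω ∂(μ[|G]) := by
    have h := my_cexp_eq_setIntegral (μ := μ) G (fun ω => S.indicator f ω)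
    simp only [cexp] at h
    rw [h]
    field_simp
  have h4 : ∫ ω, S.indicator f ω ∂(μ[|G])
      = (∫ ω, S.indicator (fun _ => (1:ℝ)) ω ∂(μ[|G])) * ∫ ω, f ω ∂(μ[|G]) := by
    rw [show (fun ω => S.indicator f ω) = (S.indicator (fun _ => (1:ℝ))) * f from by
      funext ω; by_cases h : ω ∈ S <;> simp [h]]
    exact hindep.integral_mul_eq_mul_integral
      ((integrable_const (1:ℝ)).indicator hS).aestronglyMeasurable
      (my_integrable_cond hG0 hfi).aestronglyMeasurable
  have h5 : ∫ ω, S.indicator (fun _ => (1:ℝ)) ω ∂(μ[|G]) = ((μ[|G]) S).toReal := by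
    exact integral_indicator_one hS
  have h6 : ((μ[|G]) S).toReal = (pr μ G)⁻¹ * pr μ (S ∩ G) := by
    rw [cond_apply hG, ENNReal.toReal_mul, ENNReal.toReal_inv, Set.inter_comm]
    rfl
  rw [h1, h2, h4, h5, h6, cexp]
  field_simp

end AuxLemmas

/-- identification of `E[Y₁₁ | CP]`. -/
theorem EY11_CP_identified
    {Ω : Type*} [MeasurableSpace Ω] (μ : Measure Ω) [IsProbabilityMeasure μ]
    (Y : Fin 2 → Fin 2 → Ω → ℝ) (D1 D0 Z W : Ω → ℝ)
    (hYint : ∀ d z, Integrable (Y d z) μ) (hYmeas : ∀ d z, Measurable (Y d z))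
    (hD1v : ∀ ω, D1 ω = 0 ∨ D1 ω = 1) (hD0v : ∀ ω, D0 ω = 0 ∨ D0 ω = 1)
    (hZv : ∀ ω, Z ω = 0 ∨ Z ω = 1) (hWv : ∀ ω, W ω = 0 ∨ W ω = 1)
    (hD1m : Measurable D1) (hD0m : Measurable D0) (hZm : Measurable Z) (hWm : Measurable W)
    (D : Ω → ℝ) (hD : ∀ ω, D ω = D1 ω * Z ω + D0 ω * (1 - Z ω))
    (Yo : Ω → ℝ)
    (hYo : ∀ ω, Yo ω = (Y 1 1 ω * Z ω + Y 1 0 ω * (1 - Z ω)) * D ω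
      + (Y 0 1 ω * Z ω + Y 0 0 ω * (1 - Z ω)) * (1 - D ω))
    (hmono : ∀ᵐ ω ∂μ, D0 ω ≤ D1 ω)
    (hCI1 : ∀ (d z : Fin 2) (i j : ℝ),
      IndepFun (fun ω => (Z ω, W ω)) (Y d z) (μ[|{ω | D1 ω = i ∧ D0 ω = j}]))
    (hCI2 : ∀ w' : ℝ, IndepFun Z (fun ω => (D1 ω, D0 ω)) (μ[|evEq W w']))
    (hpos : ∀ z : ℝ, z = 0 ∨ z = 1 → 0 < pr μ (evEq Z z ∩ evEq W 1))
    (hAT : 0 < pr μ (ATset D1 D0)) (hCP : 0 < pr μ (CPset D1 D0))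
    (hCPW : 0 < prCond μ (CPset D1 D0) (evEq W 1))
    (ρ1 : ℝ) (hρ1 : cexp μ (ATset D1 D0) (fun ω => Y 1 1 ω - Y 1 0 ω) = ρ1)
    (r11 : ℝ)
    (hr11 : r11 = cexp μ (evEq Z 1 ∩ evEq W 1) (fun ω => Yo ω * D ω)
      - cexp μ (evEq Z 0 ∩ evEq W 1) (fun ω => Yo ω * D ω)) :
    cexp μ (CPset D1 D0) (fun ω => Y 1 1 ω)
      = (r11 - ρ1 * prCond μ (ATset D1 D0) (evEq W 1))
        / prCond μ (CPset D1 D0) (evEq W 1) := by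
  classical
  -- measurability of the basic events
  have mA : MeasurableSet (ATset D1 D0) :=
    (hD1m (measurableSet_singleton 1)).inter (hD0m (measurableSet_singleton 1))
  have mC : MeasurableSet (CPset D1 D0) :=
    (hD1m (measurableSet_singleton 1)).inter (hD0m (measurableSet_singleton 0))
  have mDF : MeasurableSet {ω | D1 ω = 0 ∧ D0 ω = 1} :=
    (hD1m (measurableSet_singleton 0)).inter (hD0m (measurableSet_singleton 1))
  have mW1 : MeasurableSet (evEq W 1) := hWm (measurableSet_singleton 1)
  have mZ1 : MeasurableSet (evEq Z 1) := hZm (measurableSet_singleton 1)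
  have mZ0 : MeasurableSet (evEq Z 0) := hZm (measurableSet_singleton 0)
  have mS1 : MeasurableSet (evEq Z 1 ∩ evEq W 1) := mZ1.inter mW1
  have mS0 : MeasurableSet (evEq Z 0 ∩ evEq W 1) := mZ0.inter mW1
  -- nonvanishing of the relevant measures
  have hne : ∀ s : Set Ω, 0 < pr μ s → μ s ≠ 0 := by
    intro s hs h0
    rw [pr, h0] at hs
    simp at hs
  have hS1ne : μ (evEq Z 1 ∩ evEq W 1) ≠ 0 := hne _ (hpos 1 (Or.inr rfl))
  have hS0ne : μ (evEq Z 0 ∩ evEq W 1) ≠ 0 := hne _ (hpos 0 (Or.inl rfl))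
  have hAne : μ (ATset D1 D0) ≠ 0 := hne _ hAT
  have hCne : μ (CPset D1 D0) ≠ 0 := hne _ hCP
  have hW1ne : μ (evEq W 1) ≠ 0 := fun h0 =>
    hS1ne (measure_mono_null Set.inter_subset_right h0)
  -- independence of indicator events from potential outcomes, given type
  have hindep : ∀ (z : ℝ) (d z' : Fin 2) (i j : ℝ),
      IndepFun ((evEq Z z ∩ evEq W 1).indicator (fun _ => (1:ℝ))) (Y d z')
        (μ[|{ω | D1 ω = i ∧ D0 ω = j}]) := by
    intro z d z' i j
    have hφ : Measurable (fun p : ℝ × ℝ => ({(z, (1:ℝ))} : Set (ℝ × ℝ)).indicator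
        (fun _ => (1:ℝ)) p) := measurable_const.indicator (measurableSet_singleton _)
    have h := (hCI1 d z' i j).comp hφ (measurable_id : Measurable (id : ℝ → ℝ))
    have he : ((fun p : ℝ × ℝ => ({(z, (1:ℝ))} : Set (ℝ × ℝ)).indicator (fun _ => (1:ℝ)) p)
        ∘ (fun ω => (Z ω, W ω))) = (evEq Z z ∩ evEq W 1).indicator (fun _ => (1:ℝ)) := by
      funext ω
      by_cases hzw : Z ω = z ∧ W ω = 1
      · simp [Function.comp, Set.indicator_apply, evEq, Prod.ext_iff, hzw.1, hzw.2,
          Set.mem_setOf_eq]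
      · simp only [Function.comp, Set.indicator_apply, Set.mem_singleton_iff, Prod.ext_iff,
          Set.mem_inter_iff, evEq, Set.mem_setOf_eq]
    rwa [he, Function.id_comp] at h
  -- factorization of probabilities via hCI2
  have hfact : ∀ (z : ℝ) (G : Set Ω) (i j : ℝ), G = {ω | D1 ω = i ∧ D0 ω = j} →
      pr μ ((evEq Z z ∩ evEq W 1) ∩ G)
        = pr μ (evEq Z z ∩ evEq W 1) * prCond μ G (evEq W 1) := by
    intro z G i j hGeq
    subst hGeq
    have h := (ProbabilityTheory.indepFun_iff_measure_inter_preimage_eq_mul.mp (hCI2 1))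
      {z} {(i, j)} (measurableSet_singleton _) (measurableSet_singleton _)
    rw [cond_apply mW1, cond_apply mW1, cond_apply mW1] at h
    have hpre : (fun ω => (D1 ω, D0 ω)) ⁻¹' {(i, j)} = {ω | D1 ω = i ∧ D0 ω = j} := by
      ext ω; simp [Prod.ext_iff]
    have hpreZ : Z ⁻¹' {z} = evEq Z z := rfl
    rw [hpre, hpreZ] at h
    have ht := congrArg ENNReal.toReal h
    rw [ENNReal.toReal_mul, ENNReal.toReal_mul, ENNReal.toReal_mul, ENNReal.toReal_mul,
      ENNReal.toReal_inv] at ht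
    have hwpos : 0 < (μ (evEq W 1)).toReal := ENNReal.toReal_pos hW1ne (measure_ne_top _ _)
    have e1 : evEq W 1 ∩ (evEq Z z ∩ {ω | D1 ω = i ∧ D0 ω = j})
        = (evEq Z z ∩ evEq W 1) ∩ {ω | D1 ω = i ∧ D0 ω = j} := by
      ext ω; simp only [Set.mem_inter_iff, Set.mem_setOf_eq]; tauto
    have e2 : evEq W 1 ∩ evEq Z z = evEq Z z ∩ evEq W 1 := Set.inter_comm _ _
    have e3 : evEq W 1 ∩ {ω | D1 ω = i ∧ D0 ω = j}
        = {ω | D1 ω = i ∧ D0 ω = j} ∩ evEq W 1 := Set.inter_comm _ _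
    rw [e1, e2, e3] at ht
    simp only [pr, prCond]
    field_simp at ht ⊢
    nlinarith [ht]
  -- the key identity for set integrals over (Z,W)-events intersected with a type event
  have key : ∀ (z : ℝ) (d z' : Fin 2) (G : Set Ω) (i j : ℝ), G = {ω | D1 ω = i ∧ D0 ω = j} →
      μ G ≠ 0 →
      ∫ ω in (evEq Z z ∩ evEq W 1) ∩ G, Y d z' ω ∂μ
        = cexp μ G (Y d z') * pr μ ((evEq Z z ∩ evEq W 1) ∩ G) := by
    intro z d z' G i j hGeq hG0
    subst hGeq
    exact my_key_lemma
      ((hD1m (measurableSet_singleton i)).inter (hD0m (measurableSet_singleton j)))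
      ((hZm (measurableSet_singleton z)).inter mW1) hG0 (hYint d z') (hindep z d z' i j)
  -- pointwise rewriting of Yo * D on the events {Z = 1} and {Z = 0}
  have hEq1 : Set.EqOn (fun ω => Yo ω * D ω)
      (fun ω => (ATset D1 D0).indicator (Y 1 1) ω + (CPset D1 D0).indicator (Y 1 1) ω)
      (evEq Z 1 ∩ evEq W 1) := by
    intro ω hw
    have hz := hw.1
    rcases hD1v ω with h1 | h1 <;> rcases hD0v ω with h0 | h0 <;>
      simp [hYo ω, hD ω, Set.indicator_apply, ATset, CPset, Set.mem_setOf_eq,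
        show Z ω = _ from hz, h1, h0]
  have hEq0 : Set.EqOn (fun ω => Yo ω * D ω)
      (fun ω => (ATset D1 D0).indicator (Y 1 0) ω
        + ({ω | D1 ω = 0 ∧ D0 ω = 1}).indicator (Y 1 0) ω)
      (evEq Z 0 ∩ evEq W 1) := by
    intro ω hw
    have hz := hw.1
    rcases hD1v ω with h1 | h1 <;> rcases hD0v ω with h0 | h0 <;>
      simp [hYo ω, hD ω, Set.indicator_apply, ATset, CPset, Set.mem_setOf_eq,
        show Z ω = _ from hz, h1, h0]
  -- integrability facts
  have hIA1 : IntegrableOn (fun ω => (ATset D1 D0).indicator (Y 1 1) ω)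
      (evEq Z 1 ∩ evEq W 1) μ := ((hYint 1 1).indicator mA).integrableOn
  have hIC1 : IntegrableOn (fun ω => (CPset D1 D0).indicator (Y 1 1) ω)
      (evEq Z 1 ∩ evEq W 1) μ := ((hYint 1 1).indicator mC).integrableOn
  have hIA0 : IntegrableOn (fun ω => (ATset D1 D0).indicator (Y 1 0) ω)
      (evEq Z 0 ∩ evEq W 1) μ := ((hYint 1 0).indicator mA).integrableOn
  have hIDF0 : IntegrableOn (fun ω => ({ω | D1 ω = 0 ∧ D0 ω = 1}).indicator (Y 1 0) ω)
      (evEq Z 0 ∩ evEq W 1) μ := ((hYint 1 0).indicator mDF).integrableOn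
  -- defiers are a null set
  have hDFnull : μ {ω | D1 ω = 0 ∧ D0 ω = 1} = 0 := by
    have hsub : {ω | D1 ω = 0 ∧ D0 ω = 1} ⊆ {ω | ¬ D0 ω ≤ D1 ω} := by
      intro ω hω
      rw [Set.mem_setOf_eq, hω.1, hω.2]
      norm_num
    exact measure_mono_null hsub (ae_iff.mp hmono)
  -- positivity of the conditioning events
  have hS1pos : (0:ℝ) < pr μ (evEq Z 1 ∩ evEq W 1) := hpos 1 (Or.inr rfl)
  have hS0pos : (0:ℝ) < pr μ (evEq Z 0 ∩ evEq W 1) := hpos 0 (Or.inl rfl)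
  -- the two conditional expectations of Yo * D
  have hc1 : cexp μ (evEq Z 1 ∩ evEq W 1) (fun ω => Yo ω * D ω)
      = cexp μ (ATset D1 D0) (Y 1 1) * prCond μ (ATset D1 D0) (evEq W 1)
        + cexp μ (CPset D1 D0) (Y 1 1) * prCond μ (CPset D1 D0) (evEq W 1) := by
    rw [my_cexp_eq_setIntegral (μ := μ) (evEq Z 1 ∩ evEq W 1) (fun ω => Yo ω * D ω),
      setIntegral_congr_fun mS1 hEq1, integral_add hIA1 hIC1,
      setIntegral_indicator mA, setIntegral_indicator mC,
      key 1 1 1 (ATset D1 D0) 1 1 rfl hAne, key 1 1 1 (CPset D1 D0) 1 0 rfl hCne,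
      hfact 1 (ATset D1 D0) 1 1 rfl, hfact 1 (CPset D1 D0) 1 0 rfl]
    field_simp
  have hc0 : cexp μ (evEq Z 0 ∩ evEq W 1) (fun ω => Yo ω * D ω)
      = cexp μ (ATset D1 D0) (Y 1 0) * prCond μ (ATset D1 D0) (evEq W 1) := by
    rw [my_cexp_eq_setIntegral (μ := μ) (evEq Z 0 ∩ evEq W 1) (fun ω => Yo ω * D ω),
      setIntegral_congr_fun mS0 hEq0, integral_add hIA0 hIDF0,
      setIntegral_indicator mA, setIntegral_indicator mDF,
      key 0 1 0 (ATset D1 D0) 1 1 rfl hAne,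
      hfact 0 (ATset D1 D0) 1 1 rfl]
    have hz : ∫ ω in (evEq Z 0 ∩ evEq W 1) ∩ {ω | D1 ω = 0 ∧ D0 ω = 1}, Y 1 0 ω ∂μ = 0 := by
      rw [show μ.restrict ((evEq Z 0 ∩ evEq W 1) ∩ {ω | D1 ω = 0 ∧ D0 ω = 1}) = 0 from
        Measure.restrict_eq_zero.mpr (measure_mono_null Set.inter_subset_right hDFnull)]
      exact integral_zero_measure _
    rw [hz, add_zero]
    field_simp
  -- linearity of cexp over AT
  have hsub : cexp μ (ATset D1 D0) (Y 1 1) - cexp μ (ATset D1 D0) (Y 1 0) = ρ1 := by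
    rw [← hρ1]
    exact (integral_sub (my_integrable_cond hAne (hYint 1 1))
      (my_integrable_cond hAne (hYint 1 0))).symm
  -- assemble
  have hr : r11 = ρ1 * prCond μ (ATset D1 D0) (evEq W 1)
      + cexp μ (CPset D1 D0) (Y 1 1) * prCond μ (CPset D1 D0) (evEq W 1) := by
    rw [hr11, hc1, hc0, ← hsub]
    ring
  have hpC : prCond μ (CPset D1 D0) (evEq W 1) ≠ 0 := ne_of_gt hCPW
  rw [hr]
  field_simp
  ring
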